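/- The induced context-aware semantics yields a conservative extension: the CASL induced by the induced context-aware predicate transformers ⟦com⟧ind_• conservatively extends the separation logic induced by ⟦−⟧, i.e. (relative soundness) every derivable CASL judgment ⊢ ⟨c⟩{a} st {b} yields a derivable separation-logic triple ⊢ {a⋆c} st {b⋆c}, and (relative completeness) every derivable separation-logic triple ⊢ {a} st {b} yields a context c with a derivable CASL judgment ⊢ ⟨c⟩{a} st {b}. -/

import Mathlib

universe u

/-- Predicates over states: sets of states together with a top element `⊤`
indicating failure of a computation. -/
abbrev Preds (σ : Type u) : Type u := WithTop (Set σ)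

/-- A separation algebra: a cancellative partial commutative monoid `(Σ, ⋆, emp)`
with a set of units `emp` such that every state has a unit and the multiplication
of two distinct units is undefined. -/
structure SepAlgebra (σ : Type u) where
  /-- The partial multiplication; `none` means undefined. -/
  mult : σ → σ → Option σ
  mult_comm : ∀ s t, mult s t = mult t s
  mult_assoc : ∀ s t u,
    (mult s t).bind (fun v => mult v u) = (mult t u).bind (fun v => mult s v)
  cancel : ∀ s₁ s₂ t u, mult s₁ t = some u → mult s₂ t = some u → s₁ = s₂
  /-- The set of units. -/
  emp : Set σ
  unit_exists : ∀ s, ∃ e ∈ emp, mult s e = some s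
  unit_undef : ∀ e₁ ∈ emp, ∀ e₂ ∈ emp, e₁ ≠ e₂ → mult e₁ e₂ = none

variable {σ : Type u}

/-- Separating conjunction, lifted to predicates (`⊤` is absorbing). -/
def SepAlgebra.star (A : SepAlgebra σ) (a b : Preds σ) : Preds σ :=
  WithTop.recTopCoe ⊤
    (fun a' => WithTop.recTopCoe ⊤
      (fun b' => (({u | ∃ s ∈ a', ∃ t ∈ b', A.mult s t = some u} : Set σ) : Preds σ)) b) a

/-- Predicates form a complete lattice (set inclusion with `⊤` on top). -/
noncomputable instance Preds.instCompleteLattice {σ : Type u} : CompleteLattice (Preds σ) :=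
  completeLatticeOfSup (Preds σ) fun S => by
    rcases S.eq_empty_or_nonempty with rfl | hS
    · constructor
      · rintro x ⟨⟩
      · rintro b -
        have h : sSup (∅ : Set (Preds σ)) = ((⊥ : Set σ) : Preds σ) := by
          rw [WithTop.sSup_eq (by simp) (OrderTop.bddAbove _)]
          simp
        rw [h]
        induction b using WithTop.recTopCoe with
        | top => exact le_top
        | coe b => exact WithTop.coe_le_coe.2 bot_le
    · exact WithTop.isLUB_sSup' hS

/-- A (partial) ghost multiplication on states, lifted to predicates
(`⊤` is absorbing). -/
def gstar (imult : σ → σ → Option σ) (a b : Preds σ) : Preds σ :=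
  WithTop.recTopCoe ⊤
    (fun a' => WithTop.recTopCoe ⊤
      (fun b' => (({u | ∃ s ∈ a', ∃ t ∈ b', imult s t = some u} : Set σ) : Preds σ)) b) a
/-- Sequential programs over a set `C` of commands. -/
inductive Stmt (C : Type*) where
  | com : C → Stmt C
  | choice : Stmt C → Stmt C → Stmt C
  | seq : Stmt C → Stmt C → Stmt C
  | loop : Stmt C → Stmt C

variable {C : Type*}
/-- The separation-logic proof system. -/
inductive SLDeriv (A : SepAlgebra σ) (sem : C → Preds σ → Preds σ) :
    Preds σ → Stmt C → Preds σ → Prop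
  | com {c : C} {a b : Preds σ} :
      sem c a ≤ b → SLDeriv A sem a (.com c) b
  | consequence {a a' b b' : Preds σ} {st : Stmt C} :
      a ≤ a' → b' ≤ b → SLDeriv A sem a' st b' → SLDeriv A sem a st b
  | seq {a b d : Preds σ} {st₁ st₂ : Stmt C} :
      SLDeriv A sem a st₁ b → SLDeriv A sem b st₂ d → SLDeriv A sem a (.seq st₁ st₂) d
  | choice {a b : Preds σ} {st₁ st₂ : Stmt C} :
      SLDeriv A sem a st₁ b → SLDeriv A sem a st₂ b → SLDeriv A sem a (.choice st₁ st₂) b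
  | loop {a : Preds σ} {st : Stmt C} :
      SLDeriv A sem a st a → SLDeriv A sem a (.loop st) a
  | frame {a b d : Preds σ} {st : Stmt C} :
      SLDeriv A sem a st b → SLDeriv A sem (A.star a d) st (A.star b d)
/-- The context-aware separation logic (CASL) proof system. Judgments
`CASLDeriv A casem c a st b` formalize `⟨c⟩ {a} st {b}`. -/
inductive CASLDeriv (A : SepAlgebra σ) (casem : C → Preds σ → Preds σ → Preds σ) :
    Preds σ → Preds σ → Stmt C → Preds σ → Prop
  | com {c : C} {ctx a b : Preds σ} :
      casem c ctx a ≤ b → CASLDeriv A casem ctx a (.com c) b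
  | consequence {ctx a a' b b' : Preds σ} {st : Stmt C} :
      a ≤ a' → b' ≤ b → CASLDeriv A casem ctx a' st b' → CASLDeriv A casem ctx a st b
  | seq {ctx a b d : Preds σ} {st₁ st₂ : Stmt C} :
      CASLDeriv A casem ctx a st₁ b → CASLDeriv A casem ctx b st₂ d →
      CASLDeriv A casem ctx a (.seq st₁ st₂) d
  | choice {ctx a b : Preds σ} {st₁ st₂ : Stmt C} :
      CASLDeriv A casem ctx a st₁ b → CASLDeriv A casem ctx a st₂ b →
      CASLDeriv A casem ctx a (.choice st₁ st₂) b
  | loop {ctx a : Preds σ} {st : Stmt C} :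
      CASLDeriv A casem ctx a st a → CASLDeriv A casem ctx a (.loop st) a
  | frame {ctx a b d : Preds σ} {st : Stmt C} :
      CASLDeriv A casem ctx a st b →
      CASLDeriv A casem ctx (A.star a d) st (A.star b d)
  | context {ctx a b d : Preds σ} {st : Stmt C} :
      CASLDeriv A casem (A.star ctx d) a st b →
      CASLDeriv A casem ctx (A.star a d) st (A.star b d)
  | widen {ctx a b d : Preds σ} {st : Stmt C} :
      CASLDeriv A casem ctx (A.star a d) st (A.star b d) →
      CASLDeriv A casem (A.star ctx d) a st b

attribute [local instance] Classical.propDecidable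

theorem gstar_mono (m : σ → σ → Option σ) {a a' b b' : Preds σ} (ha : a ≤ a') (hb : b ≤ b') :
    gstar m a b ≤ gstar m a' b' := by
  induction a' using WithTop.recTopCoe with
  | top => exact le_top
  | coe a' =>
    induction a using WithTop.recTopCoe with
    | top => exact absurd ha (by simp)
    | coe a =>
      induction b' using WithTop.recTopCoe with
      | top => exact le_top
      | coe b' =>
        induction b using WithTop.recTopCoe with
        | top => exact absurd hb (by simp)
        | coe b =>
          refine WithTop.coe_le_coe.2 ?_
          rintro u ⟨s, hs, t, ht, h⟩
          exact ⟨s, WithTop.coe_le_coe.1 ha hs, t, WithTop.coe_le_coe.1 hb ht, h⟩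

theorem gstar_comm (m : σ → σ → Option σ) (hm : ∀ s t, m s t = m t s) (a b : Preds σ) :
    gstar m a b = gstar m b a := by
  induction a using WithTop.recTopCoe with
  | top => induction b using WithTop.recTopCoe <;> rfl
  | coe a =>
    induction b using WithTop.recTopCoe with
    | top => rfl
    | coe b =>
      show (({u | ∃ s ∈ a, ∃ t ∈ b, m s t = some u} : Set σ) : Preds σ)
        = (({u | ∃ s ∈ b, ∃ t ∈ a, m s t = some u} : Set σ) : Preds σ)
      apply congrArg
      ext u
      constructor <;> rintro ⟨s, hs, t, ht, h⟩ <;>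
        exact ⟨t, ht, s, hs, by rw [hm]; exact h⟩

theorem gstar_assoc (m : σ → σ → Option σ)
    (hm : ∀ s t u, (m s t).bind (fun v => m v u) = (m t u).bind (fun v => m s v))
    (a b c : Preds σ) : gstar m (gstar m a b) c = gstar m a (gstar m b c) := by
  induction a using WithTop.recTopCoe with
  | top => rfl
  | coe a =>
    induction b using WithTop.recTopCoe with
    | top => rfl
    | coe b =>
      induction c using WithTop.recTopCoe with
      | top => rfl
      | coe c =>
        show (({u | ∃ v ∈ {v | ∃ s ∈ a, ∃ t ∈ b, m s t = some v}, ∃ w ∈ c,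
            m v w = some u} : Set σ) : Preds σ)
          = (({u | ∃ s ∈ a, ∃ v ∈ {v | ∃ t ∈ b, ∃ w ∈ c, m t w = some v},
            m s v = some u} : Set σ) : Preds σ)
        apply congrArg
        ext u
        constructor
        · rintro ⟨v, ⟨s, hs, t, ht, hst⟩, w, hw, hvw⟩
          have h2 : (m t w).bind (fun x => m s x) = some u := by
            rw [← hm s t w, hst]; simpa using hvw
          obtain ⟨x, hx1, hx2⟩ := Option.bind_eq_some_iff.1 h2
          exact ⟨s, hs, x, ⟨t, ht, w, hw, hx1⟩, hx2⟩
        · rintro ⟨s, hs, v, ⟨t, ht, w, hw, htw⟩, hsv⟩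
          have h2 : (m s t).bind (fun x => m x w) = some u := by
            rw [hm s t w, htw]; simpa using hsv
          obtain ⟨x, hx1, hx2⟩ := Option.bind_eq_some_iff.1 h2
          exact ⟨x, ⟨s, hs, t, ht, hx1⟩, w, hw, hx2⟩

theorem SepAlgebra.star_mono (A : SepAlgebra σ) {a a' b b' : Preds σ}
    (ha : a ≤ a') (hb : b ≤ b') : A.star a b ≤ A.star a' b' :=
  gstar_mono A.mult ha hb

theorem SepAlgebra.star_comm' (A : SepAlgebra σ) (a b : Preds σ) :
    A.star a b = A.star b a := gstar_comm A.mult A.mult_comm a b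

theorem SepAlgebra.star_assoc' (A : SepAlgebra σ) (a b c : Preds σ) :
    A.star (A.star a b) c = A.star a (A.star b c) :=
  gstar_assoc A.mult A.mult_assoc a b c

theorem SepAlgebra.star_right_comm (A : SepAlgebra σ) (a b c : Preds σ) :
    A.star (A.star a b) c = A.star (A.star a c) b := by
  rw [A.star_assoc', A.star_comm' b c, ← A.star_assoc']

theorem SepAlgebra.star_swap (A : SepAlgebra σ) (a b c : Preds σ) :
    A.star (A.star a b) c = A.star a (A.star c b) := by
  rw [A.star_assoc', A.star_comm' b c]

/-- The induced context-aware semantics yields a conservative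
extension. The induced context-aware predicate transformer `⟦com⟧ind_c` is:
`⟦com⟧ind_emp = ⟦com⟧`, and for `c ≠ emp`, `⟦com⟧ind_c(a) = [c]♯(a')` if
`c = [a']♯(c)` (where `a' = up♯(com)(a)`) and `⊤` otherwise. The CASL induced
by it conservatively extends the separation logic induced by `⟦−⟧`:
relative soundness and relative completeness hold. -/
theorem induced_casl_conservative_extension (A : SepAlgebra σ)
    (imult : σ → σ → Option σ)
    (imult_comm : ∀ s t, imult s t = imult t s)
    (imult_assoc : ∀ s t u,
      (imult s t).bind (fun v => imult v u) = (imult t u).bind (fun v => imult s v))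
    (sem up upS : C → Preds σ → Preds σ) (gabs : Preds σ → Preds σ → Preds σ)
    -- predicate transformers: strict in ⊤, distributing over arbitrary joins
    (hsem_strict : ∀ c : C, sem c ⊤ = ⊤)
    (hsem_join : ∀ (c : C) (P : Set (Preds σ)), sem c (sSup P) = ⨆ a ∈ P, sem c a)
    (hup_strict : ∀ c : C, up c ⊤ = ⊤)
    (hup_join : ∀ (c : C) (P : Set (Preds σ)), up c (sSup P) = ⨆ a ∈ P, up c a)
    (hupS_strict : ∀ c : C, upS c ⊤ = ⊤)
    (hupS_join : ∀ (c : C) (P : Set (Preds σ)), upS c (sSup P) = ⨆ a ∈ P, upS c a)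
    (hgabs_strict : ∀ a : Preds σ, gabs a ⊤ = ⊤)
    (hgabs_join : ∀ (a : Preds σ) (P : Set (Preds σ)),
      gabs a (sSup P) = ⨆ d ∈ P, gabs a d)
    -- the standard semantics is local
    (hsem_local : ∀ (c : C) (a b : Preds σ), sem c (A.star a b) ≤ A.star (sem c a) b)
    -- the semantics decomposes into the core update and the induced update
    (hsem_up : ∀ (c : C) (a d : Preds σ), sem c (A.star a d) = up c (A.star a d))
    (hup_dec : ∀ (c : C) (a d : Preds σ), up c a ≠ ⊤ →
      up c (A.star a d) = gstar imult (up c a) d)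
    -- `up♯` is an approximate core update
    (hupS_dec : ∀ (c : C) (a d : Preds σ), upS c a ≠ ⊤ →
      upS c (A.star a d) = gstar imult (upS c a) d)
    (hupS_sound : ∀ (c : C) (a : Preds σ), up c a ≤ upS c a)
    -- `[·]♯` is an approximate ghost multiplication
    (hgabs_sound : ∀ a d : Preds σ, gstar imult a d ≤ A.star (gabs d a) (gabs a d))
    -- the induced context-aware semantics
    (casem : C → Preds σ → Preds σ → Preds σ)
    (hcasem : ∀ (c : C) (ctx a : Preds σ),
      casem c ctx a =
        if ctx = ((A.emp : Set σ) : Preds σ) then sem c a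
        else if ctx = gabs (upS c a) ctx then gabs ctx (upS c a) else ⊤) :
    (∀ (st : Stmt C) (a b ctx : Preds σ),
        CASLDeriv A casem ctx a st b →
        SLDeriv A sem (A.star a ctx) st (A.star b ctx)) ∧
    (∀ (st : Stmt C) (a b : Preds σ),
        SLDeriv A sem a st b → ∃ ctx : Preds σ, CASLDeriv A casem ctx a st b) := by
  constructor
  · intro st a b ctx h
    induction h with
    | @com c ctx a b hle =>
      refine SLDeriv.com ?_
      by_cases hb : b = ⊤
      · subst hb; exact le_top
      rw [hcasem] at hle
      by_cases hctx : ctx = ((A.emp : Set σ) : Preds σ)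
      · rw [if_pos hctx] at hle
        exact (hsem_local c a ctx).trans (A.star_mono hle le_rfl)
      rw [if_neg hctx] at hle
      by_cases hfix : ctx = gabs (upS c a) ctx
      · rw [if_pos hfix] at hle
        have hupS_ne : upS c a ≠ ⊤ := by
          intro h
          rw [h, hgabs_strict] at hle
          exact hb (top_le_iff.1 hle)
        have hup_ne : up c a ≠ ⊤ := by
          intro h
          exact hupS_ne (top_le_iff.1 (h ▸ hupS_sound c a))
        calc sem c (A.star a ctx) = up c (A.star a ctx) := hsem_up c a ctx
          _ = gstar imult (up c a) ctx := hup_dec c a ctx hup_ne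
          _ ≤ gstar imult (upS c a) ctx := gstar_mono imult (hupS_sound c a) le_rfl
          _ ≤ A.star (gabs ctx (upS c a)) (gabs (upS c a) ctx) := hgabs_sound _ _
          _ = A.star (gabs ctx (upS c a)) ctx := by rw [← hfix]
          _ ≤ A.star b ctx := A.star_mono hle le_rfl
      · rw [if_neg hfix] at hle
        exact absurd (top_le_iff.1 hle) hb
    | consequence h1 h2 _ ih =>
      exact SLDeriv.consequence (A.star_mono h1 le_rfl) (A.star_mono h2 le_rfl) ih
    | seq _ _ ih1 ih2 => exact SLDeriv.seq ih1 ih2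
    | choice _ _ ih1 ih2 => exact SLDeriv.choice ih1 ih2
    | loop _ ih => exact SLDeriv.loop ih
    | @frame ctx a b d st _ ih =>
      exact SLDeriv.consequence (le_of_eq (A.star_right_comm a d ctx))
        (le_of_eq (A.star_right_comm b ctx d)) (SLDeriv.frame ih)
    | @context ctx a b d st _ ih =>
      exact SLDeriv.consequence (le_of_eq (A.star_swap a d ctx))
        (le_of_eq (A.star_swap b d ctx).symm) ih
    | @widen ctx a b d st _ ih =>
      exact SLDeriv.consequence (le_of_eq (A.star_swap a d ctx).symm)
        (le_of_eq (A.star_swap b d ctx)) ih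
  · intro st a b h
    refine ⟨((A.emp : Set σ) : Preds σ), ?_⟩
    induction h with
    | com h => exact CASLDeriv.com (by rw [hcasem, if_pos rfl]; exact h)
    | consequence h1 h2 _ ih => exact CASLDeriv.consequence h1 h2 ih
    | seq _ _ ih1 ih2 => exact CASLDeriv.seq ih1 ih2
    | choice _ _ ih1 ih2 => exact CASLDeriv.choice ih1 ih2
    | loop _ ih => exact CASLDeriv.loop ih
    | frame _ ih => exact CASLDeriv.frame ih
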